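/- Fix integers n ≥ 1, ω ≥ 1 and 1 ≤ k ≤ n. Let ℓ ∈ C(k,n,ω) and let f : ℤ → ℤ be the corresponding bounded affine permutation, f(a) = a + ℓ_{a mod n}. Then the number of triples (i,j,r) with i, j ∈ ℤ/nℤ and r an integer satisfying 1 ≤ r ≤ min(ℓ_i, ωn − ℓ_j), i + ℓ_i ≡ j + ℓ_j + r (mod n) and ℓ_i > ℓ_j + r (i.e. the number of moment-graph edges starting at ℓ) equals l(f) := #{(a,b) ∈ {1,…,n} × ℤ : a < b and f(a) > f(b)}. -/
import Mathlib

/-- The set `C(k,n,ω)` of length tuples: `ℓ : ℤ/nℤ → ℕ` with `ℓ j ≤ ωn`, total sum `kωn`,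
such that `j ↦ j + ℓ j (mod n)` is a bijection of `ℤ/nℤ`. -/
def Ctuples (n ω k : ℕ) [NeZero n] : Set (ZMod n → ℕ) :=
  {ℓ | (∀ j, ℓ j ≤ ω * n) ∧ (∑ j : ZMod n, ℓ j) = k * ω * n ∧
       Function.Bijective fun j : ZMod n => j + (ℓ j : ZMod n)}

/-- Representative of a residue class in `{1, …, n}`. -/
def zrep (n : ℕ) [NeZero n] (i : ZMod n) : ℤ :=
  if i.val = 0 then (n : ℤ) else (i.val : ℤ)

lemma zrep_pos (n : ℕ) [NeZero n] (i : ZMod n) : 1 ≤ zrep n i := by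
  unfold zrep
  have hn : 1 ≤ n := Nat.one_le_iff_ne_zero.mpr (NeZero.ne n)
  split <;> omega

lemma zrep_le (n : ℕ) [NeZero n] (i : ZMod n) : zrep n i ≤ n := by
  unfold zrep
  have := ZMod.val_lt i
  split <;> omega

lemma zrep_cast (n : ℕ) [NeZero n] (i : ZMod n) : ((zrep n i : ℤ) : ZMod n) = i := by
  unfold zrep
  split
  next h =>
    have : i = 0 := (ZMod.val_eq_zero i).mp h
    subst this
    push_cast
    simp
  next h =>
    push_cast
    exact ZMod.natCast_rightInverse i

lemma zrep_of_mem (n : ℕ) [NeZero n] (a : ℤ) (h1 : 1 ≤ a) (h2 : a ≤ n) :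
    zrep n ((a : ZMod n)) = a := by
  have hval : (((a : ZMod n)).val : ℤ) = a % n := ZMod.val_intCast a
  rcases eq_or_lt_of_le h2 with heq | hlt
  · have hmod : a % (n : ℤ) = 0 := by rw [heq]; exact Int.emod_self
    unfold zrep
    split
    next h => omega
    next h => omega
  · have hmod : a % (n : ℤ) = a := Int.emod_eq_of_lt (by omega) hlt
    unfold zrep
    split
    next h => omega
    next h => omega

theorem momentGraph_edge_count_eq_length
    (n ω k : ℕ) [NeZero n] (hω : 1 ≤ ω) (hk : 1 ≤ k) (hkn : k ≤ n)
    (ℓ : ZMod n → ℕ) (hℓ : ℓ ∈ Ctuples n ω k)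
    (f : ℤ → ℤ) (hf : ∀ a : ℤ, f a = a + (ℓ (a : ZMod n) : ℤ)) :
    {t : ZMod n × ZMod n × ℕ |
        1 ≤ t.2.2 ∧ t.2.2 ≤ ℓ t.1 ∧ ℓ t.2.1 + t.2.2 ≤ ω * n ∧
        t.1 + (ℓ t.1 : ZMod n) = t.2.1 + (ℓ t.2.1 : ZMod n) + (t.2.2 : ZMod n) ∧
        ℓ t.2.1 + t.2.2 < ℓ t.1}.ncard =
      {p : ℤ × ℤ | 1 ≤ p.1 ∧ p.1 ≤ n ∧ p.1 < p.2 ∧ f p.2 < f p.1}.ncard := by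
  obtain ⟨hbd, -, -⟩ := hℓ
  set φ : ZMod n × ZMod n × ℕ → ℤ × ℤ := fun t =>
    (zrep n t.1, zrep n t.1 + (ℓ t.1 : ℤ) - (ℓ t.2.1 : ℤ) - (t.2.2 : ℤ)) with hφ
  set S := {t : ZMod n × ZMod n × ℕ |
        1 ≤ t.2.2 ∧ t.2.2 ≤ ℓ t.1 ∧ ℓ t.2.1 + t.2.2 ≤ ω * n ∧
        t.1 + (ℓ t.1 : ZMod n) = t.2.1 + (ℓ t.2.1 : ZMod n) + (t.2.2 : ZMod n) ∧
        ℓ t.2.1 + t.2.2 < ℓ t.1} with hS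
  have himg : φ '' S = {p : ℤ × ℤ | 1 ≤ p.1 ∧ p.1 ≤ n ∧ p.1 < p.2 ∧ f p.2 < f p.1} := by
    ext ⟨a, b⟩
    constructor
    · rintro ⟨⟨i, j, r⟩, ⟨hr1, hrl, hbnd, hcong, hlt⟩, heq⟩
      simp only [hφ, Prod.mk.injEq] at heq
      obtain ⟨ha, hb⟩ := heq
      have hia : ((a : ℤ) : ZMod n) = i := ha ▸ zrep_cast n i
      have hjb : ((b : ℤ) : ZMod n) = j := by
        rw [← hb]
        push_cast
        rw [zrep_cast n i]
        have : i + (ℓ i : ZMod n) - (ℓ j : ZMod n) - (r : ZMod n) = j := by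
          rw [hcong]; ring
        linear_combination (this : _)
      refine ⟨ha ▸ zrep_pos n i, ha ▸ zrep_le n i, ?_, ?_⟩
      · rw [← hb, ← ha]
        have : (ℓ j : ℤ) + r < ℓ i := by exact_mod_cast hlt
        omega
      · rw [hf a, hf b, hia, hjb, ← hb, ← ha]
        have hr1' : 1 ≤ (r : ℤ) := by exact_mod_cast hr1
        omega
    · rintro ⟨ha1, han, hab, hfb⟩
      set i : ZMod n := (a : ZMod n) with hi
      set j : ZMod n := (b : ZMod n) with hj
      rw [hf a, hf b, ← hi, ← hj] at hfb
      set R : ℤ := (ℓ i : ℤ) - (ℓ j : ℤ) - (b - a) with hR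
      have hR1 : 1 ≤ R := by omega
      refine ⟨⟨i, j, R.toNat⟩, ⟨?_, ?_, ?_, ?_, ?_⟩, ?_⟩
      · show 1 ≤ R.toNat
        omega
      · show R.toNat ≤ ℓ i
        have : (0:ℤ) ≤ ℓ j := Int.natCast_nonneg _
        omega
      · show ℓ j + R.toNat ≤ ω * n
        have h1 : (ℓ i : ℤ) ≤ (ω * n : ℕ) := by exact_mod_cast hbd i
        push_cast at h1
        omega
      · have : i + (ℓ i : ZMod n) = j + (ℓ j : ZMod n) + ((R.toNat : ℤ) : ZMod n) := by
          rw [Int.toNat_of_nonneg (by omega)]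
          have hcast : ((a + (ℓ i : ℤ) : ℤ) : ZMod n) = ((b + (ℓ j : ℤ) + R : ℤ) : ZMod n) := by
            congr 1; omega
          push_cast at hcast
          rw [hi, hj]
          push_cast
          linear_combination hcast
        exact_mod_cast this
      · have : (ℓ j : ℤ) + R.toNat < ℓ i := by
          rw [Int.toNat_of_nonneg (by omega)]; omega
        exact_mod_cast this
      · simp only [hφ, Prod.mk.injEq]
        have hza : zrep n i = a := zrep_of_mem n a ha1 han
        constructor
        · exact hza
        · rw [hza, Int.toNat_of_nonneg (by omega)]
          omega
  have hinj : Set.InjOn φ S := by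
    rintro ⟨i, j, r⟩ ⟨hr1, hrl, hbnd, hcong, hlt⟩ ⟨i', j', r'⟩ ⟨hr1', hrl', hbnd', hcong', hlt'⟩ heq
    simp only [hφ, Prod.mk.injEq] at heq
    obtain ⟨h1, h2⟩ := heq
    have hii : i = i' := by
      have := zrep_cast n i
      rw [h1, zrep_cast n i'] at this
      exact this.symm
    subst hii
    rw [h1] at h2
    have h3 : (ℓ j : ℤ) + r = (ℓ j' : ℤ) + r' := by omega
    have hjj : j = j' := by
      have hcj : ((zrep n i + (ℓ i : ℤ) - (ℓ j : ℤ) - (r : ℤ) : ℤ) : ZMod n) = j := by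
        push_cast
        rw [zrep_cast n i]
        have : i + (ℓ i : ZMod n) - (ℓ j : ZMod n) - (r : ZMod n) = j := by
          rw [hcong]; ring
        linear_combination (this : _)
      have hcj' : ((zrep n i + (ℓ i : ℤ) - (ℓ j' : ℤ) - (r' : ℤ) : ℤ) : ZMod n) = j' := by
        push_cast
        rw [zrep_cast n i]
        have : i + (ℓ i : ZMod n) - (ℓ j' : ZMod n) - (r' : ZMod n) = j' := by
          rw [hcong']; ring
        linear_combination (this : _)
      rw [h2] at hcj
      rw [← hcj, hcj']
    subst hjj
    have : r = r' := by omega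
    simp [this]
  calc S.ncard = (φ '' S).ncard := (Set.ncard_image_of_injOn hinj).symm
    _ = _ := by rw [himg]
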